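/- Let f : ℝ → ℝ be continuously differentiable with compact support in (0,∞). Then ∫₀^∞ (f'(r) + f(r)/(2r))² dr ≥ ∫₀^∞ f(r)²/r² dr. -/

import Mathlib

open MeasureTheory Set

/-- For `f : ℝ → ℝ` continuously differentiable with compact support in `(0,∞)`,
`∫₀^∞ (f'(r) + f(r)/(2r))² dr ≥ ∫₀^∞ f(r)²/r² dr`. -/
theorem stmt2 (f : ℝ → ℝ) (hf : ContDiff ℝ 1 f) (hsupp : HasCompactSupport f)
    (hpos : tsupport f ⊆ Set.Ioi 0) :
    ∫ r in Set.Ioi (0:ℝ), (deriv f r + f r / (2 * r)) ^ 2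
      ≥ ∫ r in Set.Ioi (0:ℝ), (f r) ^ 2 / r ^ 2 := by
  -- find ε > 0 with f = 0 on (-∞, ε)
  obtain ⟨ε, hε, hfε⟩ : ∃ ε > 0, ∀ r < ε, f r = 0 := by
    rcases eq_empty_or_nonempty (tsupport f) with h | h
    · exact ⟨1, one_pos, fun r _ => image_eq_zero_of_notMem_tsupport (by simp [h])⟩
    · have h1 : sInf (tsupport f) ∈ tsupport f := hsupp.sInf_mem h
      refine ⟨sInf (tsupport f), hpos h1, fun r hr =>
        image_eq_zero_of_notMem_tsupport fun hrmem => ?_⟩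
      exact absurd (csInf_le hsupp.bddBelow hrmem) (not_le.2 hr)
  have hdf : Differentiable ℝ f := hf.differentiable one_ne_zero
  have hcdf : Continuous (deriv f) := hf.continuous_deriv le_rfl
  -- deriv f vanishes below ε
  have hdfε : ∀ r < ε, deriv f r = 0 := by
    intro r hr
    have hev : f =ᶠ[nhds r] (fun _ => (0:ℝ)) := by
      filter_upwards [Iio_mem_nhds hr] with x hx using hfε x hx
    rw [hev.deriv_eq, deriv_const]
  -- helper: continuity from continuity on Ioi 0 plus vanishing below ε
  have cont_aux : ∀ g : ℝ → ℝ, ContinuousOn g (Ioi 0) → (∀ r < ε, g r = 0) →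
      Continuous g := by
    intro g hg h0
    rw [continuous_iff_continuousAt]
    intro r
    rcases lt_or_ge r ε with h | h
    · have hev : g =ᶠ[nhds r] (fun _ => (0:ℝ)) := by
        filter_upwards [Iio_mem_nhds h] with x hx using h0 x hx
      exact ContinuousAt.congr continuousAt_const hev.symm
    · exact hg.continuousAt (Ioi_mem_nhds (lt_of_lt_of_le hε h))
  set B : ℝ → ℝ := fun r => (deriv f r - f r / (2 * r)) ^ 2 with hB
  set C : ℝ → ℝ := fun r => f r ^ 2 / r ^ 2 with hC
  set D : ℝ → ℝ := fun r => 2 * f r * deriv f r / r with hD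
  set G : ℝ → ℝ := fun r => f r ^ 2 * (-r⁻¹) with hG
  have hBc : Continuous B := by
    apply cont_aux
    · exact ((hcdf.continuousOn.sub ((hf.continuous.continuousOn.div
        (by fun_prop) (fun x hx => by have : (0:ℝ) < x := hx; positivity)))).pow 2)
    · intro r hr; simp [hB, hfε r hr, hdfε r hr]
  have hCc : Continuous C := by
    apply cont_aux
    · exact (hf.continuous.continuousOn.pow 2).div (by fun_prop)
        (fun x hx => by have : (0:ℝ) < x := hx; positivity)
    · intro r hr; simp [hC, hfε r hr]
  have hDc : Continuous D := by
    apply cont_aux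
    · exact ((continuous_const.mul hf.continuous).mul hcdf).continuousOn.div
        (by fun_prop) (fun x hx => ne_of_gt hx)
    · intro r hr; simp [hD, hfε r hr]
  -- compact supports
  have hsub : ∀ x, x ∉ tsupport f → f x = 0 ∧ deriv f x = 0 := by
    intro x hx
    refine ⟨image_eq_zero_of_notMem_tsupport hx, ?_⟩
    have hev : f =ᶠ[nhds x] (fun _ => (0:ℝ)) := by
      filter_upwards [(isClosed_tsupport f).isOpen_compl.mem_nhds hx] with y hy
        using image_eq_zero_of_notMem_tsupport hy
    rw [hev.deriv_eq, deriv_const]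
  have hBs : HasCompactSupport B :=
    HasCompactSupport.intro hsupp (fun x hx => by simp [hB, (hsub x hx).1, (hsub x hx).2])
  have hCs : HasCompactSupport C :=
    HasCompactSupport.intro hsupp (fun x hx => by simp [hC, (hsub x hx).1])
  have hDs : HasCompactSupport D :=
    HasCompactSupport.intro hsupp (fun x hx => by simp [hD, (hsub x hx).1])
  have hGs : HasCompactSupport G :=
    HasCompactSupport.intro hsupp (fun x hx => by simp [hG, (hsub x hx).1])
  -- derivative of G on Ioi 0
  have hGd : ∀ r ∈ Ioi (0:ℝ), HasDerivAt G (C r - D r) r := by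
    intro r hr
    have hr0 : (r:ℝ) ≠ 0 := ne_of_gt hr
    have h1 : HasDerivAt (fun x => f x ^ 2) (2 * f r ^ 1 * deriv f r) r :=
      (hdf r).hasDerivAt.pow 2
    have h2 : HasDerivAt (fun x : ℝ => -x⁻¹) ((r ^ 2)⁻¹) r := by
      simpa using (hasDerivAt_inv hr0).fun_neg
    have := h1.fun_mul h2
    refine this.congr_deriv ?_
    show _ = f r ^ 2 / r ^ 2 - 2 * f r * deriv f r / r
    field_simp
    ring
  have hGderiv : ∀ r ∈ Ioi (0:ℝ), deriv G r = C r - D r := fun r hr => (hGd r hr).deriv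
  have hGderiv0 : ∀ x, x ∉ tsupport f → deriv G x = 0 := by
    intro x hx
    have hev : G =ᶠ[nhds x] (fun _ => (0:ℝ)) := by
      filter_upwards [(isClosed_tsupport f).isOpen_compl.mem_nhds hx] with y hy
      simp [hG, image_eq_zero_of_notMem_tsupport hy]
    rw [hev.deriv_eq, deriv_const]
  -- integral of deriv G over Ioi 0 is 0
  obtain ⟨b0, hb0⟩ := hsupp.bddAbove
  set b : ℝ := max b0 ε + 1 with hb
  have hab : ε / 2 ≤ b := by
    have : ε ≤ max b0 ε := le_max_right _ _
    linarith
  have hge : tsupport f ⊆ Ici ε := by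
    apply closure_minimal ?_ isClosed_Ici
    intro x hx
    rcases lt_or_ge x ε with h | h
    · exact absurd (hfε x h) hx
    · exact h
  have hts : tsupport f ⊆ Ioc (ε / 2) b := by
    intro x hx
    refine ⟨by have := hge hx; simp only [mem_Ici] at this; linarith, ?_⟩
    have h1 := hb0 hx
    have h2 : x ≤ max b0 ε := le_trans h1 (le_max_left _ _)
    linarith
  have hntsupp : ∀ r < ε, r ∉ tsupport f := fun r hr hmem => absurd (hge hmem) (by simpa using hr)
  have hGc : Continuous (deriv G) := by
    apply cont_aux
    · exact ((hCc.sub hDc).continuousOn).congr hGderiv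
    · exact fun r hr => hGderiv0 r (hntsupp r hr)
  have hGds : HasCompactSupport (deriv G) := HasCompactSupport.intro hsupp hGderiv0
  have hBint : IntegrableOn B (Ioi 0) := (hBc.integrable_of_hasCompactSupport hBs).integrableOn
  have hCint : IntegrableOn C (Ioi 0) := (hCc.integrable_of_hasCompactSupport hCs).integrableOn
  have hDint : IntegrableOn D (Ioi 0) := (hDc.integrable_of_hasCompactSupport hDs).integrableOn
  have hGint : IntegrableOn (deriv G) (Ioi 0) :=
    (hGc.integrable_of_hasCompactSupport hGds).integrableOn
  -- ∫ deriv G over Ioi 0 is zero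
  have hkey : ∫ r in Ioi (0:ℝ), deriv G r = 0 := by
    rw [setIntegral_eq_integral_of_forall_compl_eq_zero (fun x hx => by
      simp only [mem_Ioi, not_lt] at hx
      exact hGderiv0 x (hntsupp x (lt_of_le_of_lt hx hε)))]
    rw [← setIntegral_eq_integral_of_forall_compl_eq_zero
      (s := Ioc (ε / 2) b) (fun x hx => hGderiv0 x (fun hc => hx (hts hc)))]
    rw [← intervalIntegral.integral_of_le hab]
    rw [intervalIntegral.integral_deriv_eq_sub (fun x hx => ?_) (hGc.intervalIntegrable _ _)]
    · have h1 : f (ε / 2) = 0 := hfε _ (by linarith)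
      have h2 : f b = 0 := by
        by_contra h
        have hb1 : b ∈ tsupport f := subset_closure h
        have := hb0 hb1
        have : b ≤ max b0 ε := le_trans this (le_max_left _ _)
        simp only [hb] at this
        linarith
      simp [hG, h1, h2]
    · have hx0 : (0:ℝ) < x := by
        rcases hx with ⟨h1, _⟩
        rw [min_eq_left hab] at h1
        linarith
      exact (hGd x hx0).differentiableAt
  -- ∫ D = ∫ C
  have hDC : ∫ r in Ioi (0:ℝ), D r = ∫ r in Ioi (0:ℝ), C r := by
    have : ∫ r in Ioi (0:ℝ), D r = ∫ r in Ioi (0:ℝ), (C r - deriv G r) := by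
      apply setIntegral_congr_fun measurableSet_Ioi
      intro r hr
      have := hGderiv r hr
      simp only
      linarith
    rw [this, integral_sub hCint hGint, hkey, sub_zero]
  -- pointwise expansion
  have hpt : ∀ r ∈ Ioi (0:ℝ), (deriv f r + f r / (2 * r)) ^ 2 = B r + D r := by
    intro r hr
    have hr0 : (r:ℝ) ≠ 0 := ne_of_gt hr
    simp only [hB, hC, hD]
    field_simp
    ring
  calc ∫ r in Ioi (0:ℝ), (deriv f r + f r / (2 * r)) ^ 2
      = ∫ r in Ioi (0:ℝ), (B r + D r) := setIntegral_congr_fun measurableSet_Ioi hpt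
    _ = (∫ r in Ioi (0:ℝ), B r) + ∫ r in Ioi (0:ℝ), D r := integral_add hBint hDint
    _ ≥ 0 + ∫ r in Ioi (0:ℝ), C r := by
        rw [hDC]
        gcongr
        exact setIntegral_nonneg measurableSet_Ioi (fun r _ => sq_nonneg _)
    _ = ∫ r in Ioi (0:ℝ), f r ^ 2 / r ^ 2 := by rw [zero_add]
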